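/- Let g be a C² solution on (0,1) of the Bessel-type ODE −g″ = ((n−1)/r) g′ + (μ − (n−1)/r²) g, where μ > 0, with g > 0 and g′ ≥ 0 on (0,1). Then h(r) = g′(r)² + (n−1)g(r)²/r² − μ g(r)² satisfies h′(r) = −2((n−1)/r)(g′(r) − g(r)/r)² − 4μ g(r) g′(r) < 0 for r ∈ (0,1) (strict whenever g′(r) > 0 or g′(r) ≠ g(r)/r). -/

import Mathlib

/-- Weinberger's monotonicity computation: if g solves the Bessel-type ODE
−g″ = ((n−1)/r)g′ + (μ − (n−1)/r²)g on (0,1) with μ > 0, g > 0 and g′ ≥ 0, then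
h(r) = g′(r)² + (n−1)g(r)²/r² − μg(r)² has derivative
h′(r) = −2((n−1)/r)(g′(r) − g(r)/r)² − 4μ g(r) g′(r), which is < 0 whenever
g′(r) > 0 or g′(r) ≠ g(r)/r. -/
theorem weinberger_h_derivative (n : ℕ) (hn : 2 ≤ n) (μ : ℝ) (hμ : 0 < μ)
    (g g' g'' : ℝ → ℝ)
    (hg' : ∀ r ∈ Set.Ioo (0 : ℝ) 1, HasDerivAt g (g' r) r)
    (hg'' : ∀ r ∈ Set.Ioo (0 : ℝ) 1, HasDerivAt g' (g'' r) r)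
    (hODE : ∀ r ∈ Set.Ioo (0 : ℝ) 1,
      -g'' r = ((n : ℝ) - 1) / r * g' r + (μ - ((n : ℝ) - 1) / r ^ 2) * g r)
    (hgpos : ∀ r ∈ Set.Ioo (0 : ℝ) 1, 0 < g r)
    (hg'nonneg : ∀ r ∈ Set.Ioo (0 : ℝ) 1, 0 ≤ g' r) :
    ∀ r ∈ Set.Ioo (0 : ℝ) 1,
      HasDerivAt (fun s => g' s ^ 2 + ((n : ℝ) - 1) * g s ^ 2 / s ^ 2 - μ * g s ^ 2)
        (-2 * (((n : ℝ) - 1) / r) * (g' r - g r / r) ^ 2 - 4 * μ * g r * g' r) r ∧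
      ((0 < g' r ∨ g' r ≠ g r / r) →
        -2 * (((n : ℝ) - 1) / r) * (g' r - g r / r) ^ 2 - 4 * μ * g r * g' r < 0) := by
  intro r hr
  have hr0 : (0:ℝ) < r := hr.1
  have hrne : r ≠ 0 := ne_of_gt hr0
  have hr2ne : r ^ 2 ≠ 0 := pow_ne_zero 2 hrne
  have hn1 : (1:ℝ) ≤ (n:ℝ) - 1 := by
    have : (2:ℝ) ≤ (n:ℝ) := by exact_mod_cast hn
    linarith
  constructor
  · have h1 : HasDerivAt (fun s => g' s ^ 2) (2 * g' r ^ 1 * g'' r) r :=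
      (hg'' r hr).pow 2
    have h2 : HasDerivAt (fun s => g s ^ 2) (2 * g r ^ 1 * g' r) r :=
      (hg' r hr).pow 2
    have h3 : HasDerivAt (fun s : ℝ => s ^ 2) (2 * r ^ 1 * 1) r :=
      (hasDerivAt_id r).pow 2
    have h4 : HasDerivAt (fun s => ((n : ℝ) - 1) * g s ^ 2)
        (((n:ℝ) - 1) * (2 * g r ^ 1 * g' r)) r := h2.const_mul _
    have h5 : HasDerivAt (fun s => ((n : ℝ) - 1) * g s ^ 2 / s ^ 2)
        ((((n:ℝ) - 1) * (2 * g r ^ 1 * g' r) * r ^ 2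
          - ((n:ℝ) - 1) * g r ^ 2 * (2 * r ^ 1 * 1)) / (r ^ 2) ^ 2) r :=
      h4.div h3 hr2ne
    have h6 : HasDerivAt (fun s => μ * g s ^ 2) (μ * (2 * g r ^ 1 * g' r)) r :=
      h2.const_mul _
    have := (h1.add h5).sub h6
    convert this using 1
    · rfl
    · rfl
    · rfl
    have hode := hODE r hr
    have hgd : g'' r = -(((n : ℝ) - 1) / r * g' r + (μ - ((n : ℝ) - 1) / r ^ 2) * g r) := by
      linarith
    rw [hgd]
    field_simp
    ring
  · intro hcase
    have hA : -2 * (((n : ℝ) - 1) / r) * (g' r - g r / r) ^ 2 ≤ 0 := by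
      have : 0 ≤ (((n : ℝ) - 1) / r) * (g' r - g r / r) ^ 2 :=
        mul_nonneg (div_nonneg (by linarith) hr0.le) (sq_nonneg _)
      nlinarith
    have hB : -(4 * μ * g r * g' r) ≤ 0 := by
      have := mul_nonneg (mul_nonneg (mul_nonneg (by norm_num : (0:ℝ) ≤ 4) hμ.le)
        (hgpos r hr).le) (hg'nonneg r hr)
      linarith
    rcases hcase with h | h
    · have : 0 < 4 * μ * g r * g' r :=
        mul_pos (mul_pos (mul_pos (by norm_num) hμ) (hgpos r hr)) h
      nlinarith
    · have hsq : 0 < (g' r - g r / r) ^ 2 := by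
        have : g' r - g r / r ≠ 0 := sub_ne_zero.mpr h
        positivity
      have : 0 < (((n : ℝ) - 1) / r) * (g' r - g r / r) ^ 2 :=
        mul_pos (div_pos (by linarith) hr0) hsq
      nlinarith
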